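/- There is an absolute constant c > 0 such that the following holds for all sufficiently large primes p. Let λ₁ ∈ F_p, let λ₂, λ₃ ∈ F_p be such that X² + λ₂X + λ₃ is irreducible over F_p with roots ω₂, ω₃ ∈ F_{p²}, let I, J ⊆ [1, p−1] be intervals of integers with p^{3/8} ≤ |I|, |J| < p^{1/2}, and let I₀ be the set of integers in [1, p^{3/8}/4]. Then the number of tuples (x, y, x₀, y₀, x', y', x₀', y₀') ∈ I × J × I₀ × I₀ × I × J × I₀ × I₀ such that, for each μ ∈ {λ₁, ω₂, ω₃}, (x − μy)(x₀ − μy₀) = (x' − μy')(x₀' − μy₀') with all these factors nonzero, is at most exp(c · log p / log log p) · (|I||J|)². -/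

import Mathlib

set_option maxHeartbeats 1000000

open Finset Polynomial

lemma int_zero_of_dvd_abs {q n : ℤ} (hdvd : q ∣ n) (h : |n| < q) : n = 0 := by
  by_contra h0
  have := Int.le_of_dvd (abs_pos.mpr h0) ((dvd_abs q n).mpr hdvd)
  linarith

lemma int_ediv_cast_le (a d : ℤ) (hd : 0 < d) : ((a / d : ℤ) : ℝ) ≤ (a : ℝ) / d := by
  rw [le_div_iff₀ (by exact_mod_cast hd)]
  have h := Int.ediv_mul_le a hd.ne'
  exact_mod_cast h

lemma ap_card_le (X : Finset ℤ) (a b d : ℤ) (hd : 0 < d) (hX : X ⊆ Finset.Icc a b)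
    (hdvd : ∀ x₁ ∈ X, ∀ x₂ ∈ X, d ∣ x₁ - x₂) (hne : X.Nonempty) :
    (X.card : ℤ) ≤ (b - a) / d + 1 := by
  classical
  set m := X.min' hne with hm
  have hmX : m ∈ X := X.min'_mem hne
  have hcard : X.card ≤ (Finset.Icc (0:ℤ) ((b - a)/d)).card := by
    apply Finset.card_le_card_of_injOn (fun x => (x - m) / d)
    · intro x hx
      have hdx : d ∣ x - m := hdvd x hx m hmX
      have hx1 := hX hx
      have hm1 := hX hmX
      simp only [Finset.mem_coe, Finset.mem_Icc] at hx1 hm1 ⊢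
      constructor
      · exact Int.ediv_nonneg (by linarith [X.min'_le x hx]) hd.le
      · exact Int.ediv_le_ediv hd (by linarith)
    · intro x₁ h₁ x₂ h₂ hf
      have hf' : (x₁ - m) / d = (x₂ - m) / d := hf
      have d₁ : d ∣ x₁ - m := hdvd x₁ h₁ m hmX
      have d₂ : d ∣ x₂ - m := hdvd x₂ h₂ m hmX
      have e₁ : (x₁ - m) / d * d = x₁ - m := Int.ediv_mul_cancel d₁
      have e₂ : (x₂ - m) / d * d = x₂ - m := Int.ediv_mul_cancel d₂
      rw [hf', e₂] at e₁
      linarith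
  have hc2 : (Finset.Icc (0:ℤ) ((b - a)/d)).card = ((b - a)/d + 1).toNat := by
    rw [Int.card_Icc]; ring_nf
  have hnn : 0 ≤ (b - a) / d := by
    have hab : a ≤ b := by
      have := hX hmX; simp only [Finset.mem_Icc] at this; linarith
    exact Int.ediv_nonneg (by linarith) hd.le
  calc (X.card : ℤ) ≤ ((Finset.Icc (0:ℤ) ((b - a)/d)).card : ℤ) := by exact_mod_cast hcard
    _ = (((b - a)/d + 1).toNat : ℤ) := by exact_mod_cast hc2
    _ = (b - a)/d + 1 := Int.toNat_of_nonneg (by linarith)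

lemma harmonic_nat_le (n : ℕ) : ∑ b ∈ Finset.Icc 1 n, (1 : ℝ) / b ≤ 1 + Real.log n := by
  induction n with
  | zero => simp [Real.log_zero]
  | succ n ih =>
    rw [Finset.sum_Icc_succ_top (by omega)]
    rcases Nat.eq_zero_or_pos n with rfl | hn
    · norm_num
    · have hlog : Real.log n + 1 / (n + 1) ≤ Real.log (n + 1) := by
        have h1 : (0:ℝ) < n := by exact_mod_cast hn
        have h2 : (0:ℝ) < (n:ℝ) + 1 := by positivity
        have := Real.log_le_sub_one_of_pos (x := (n : ℝ) / ((n : ℝ) + 1)) (by positivity)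
        rw [Real.log_div h1.ne' h2.ne'] at this
        have heq : (n:ℝ) / ((n:ℝ)+1) - 1 = -(1/((n:ℝ)+1)) := by field_simp; ring
        rw [heq] at this
        linarith
      push_cast
      push_cast at ih hlog
      linarith

lemma harmonic_int_le (M : ℤ) (hM : 0 ≤ M) :
    ∑ b ∈ Finset.Icc (1:ℤ) M, (1 : ℝ) / b ≤ 1 + Real.log M := by
  have heq : ∑ b ∈ Finset.Icc (1:ℤ) M, (1 : ℝ) / b = ∑ b ∈ Finset.Icc 1 M.toNat, (1:ℝ)/b := by
    refine Finset.sum_nbij' (fun b => b.toNat) (fun b => (b : ℤ)) ?_ ?_ ?_ ?_ ?_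
    · intro x hx; simp only [Finset.mem_Icc] at hx ⊢; omega
    · intro x hx; simp only [Finset.mem_Icc] at hx ⊢; omega
    · intro x hx; simp only [Finset.mem_Icc] at hx; omega
    · intro x hx; simp
    · intro x hx
      simp only [Finset.mem_Icc] at hx
      have hc : ((x.toNat : ℕ) : ℝ) = (x : ℝ) := by
        exact_mod_cast congrArg Int.cast (Int.toNat_of_nonneg (by omega : (0:ℤ) ≤ x))
      rw [hc]
  rw [heq]
  have h2 := harmonic_nat_le M.toNat
  have h3 : ((M.toNat : ℕ) : ℝ) = (M : ℝ) := by exact_mod_cast congrArg Int.cast (Int.toNat_of_nonneg hM)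
  rwa [h3] at h2

/-- Reindexing a sum over multiples of `g` in `[1,M]`. -/
lemma sum_multiples_reindex (M g : ℤ) (hg : 0 < g) (f : ℤ → ℝ) :
    ∑ s ∈ (Finset.Icc (1:ℤ) M).filter (fun s => g ∣ s), f s
      = ∑ b ∈ Finset.Icc (1:ℤ) (M / g), f (g * b) := by
  refine Finset.sum_nbij' (fun s => s / g) (fun b => g * b) ?_ ?_ ?_ ?_ ?_
  · intro x hx
    simp only [Finset.mem_filter, Finset.mem_Icc] at hx ⊢
    obtain ⟨⟨h1, h2⟩, hdvd⟩ := hx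
    constructor
    · have hgx : g ≤ x := Int.le_of_dvd (by omega) hdvd
      calc (1:ℤ) = g / g := (Int.ediv_self hg.ne').symm
        _ ≤ x / g := Int.ediv_le_ediv hg hgx
    · exact Int.ediv_le_ediv hg h2
  · intro b hb
    simp only [Finset.mem_Icc] at hb
    simp only [Finset.mem_filter, Finset.mem_Icc]
    refine ⟨⟨by nlinarith [hb.1], ?_⟩, Dvd.intro b rfl⟩
    calc g * b ≤ g * (M / g) := by nlinarith [hb.2]
      _ ≤ M := by rw [mul_comm]; exact Int.ediv_mul_le M hg.ne'
  · intro x hx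
    simp only [Finset.mem_filter] at hx
    exact Int.mul_ediv_cancel' hx.2
  · intro b hb
    exact Int.mul_ediv_cancel_left b hg.ne'
  · intro x hx
    simp only [Finset.mem_filter] at hx
    rw [Int.mul_ediv_cancel' hx.2]

lemma card_multiples_le (M g : ℤ) (hg : 0 < g) (hM : 0 ≤ M) :
    (((Finset.Icc (1:ℤ) M).filter (fun s => g ∣ s)).card : ℝ) ≤ (M : ℝ) / g := by
  have h1 : (((Finset.Icc (1:ℤ) M).filter (fun s => g ∣ s)).card : ℝ)
      = ∑ s ∈ (Finset.Icc (1:ℤ) M).filter (fun s => g ∣ s), (1:ℝ) := by simp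
  rw [h1, sum_multiples_reindex M g hg (fun _ => (1:ℝ))]
  have h2 : ∑ _b ∈ Finset.Icc (1:ℤ) (M / g), (1:ℝ) = ((Finset.Icc (1:ℤ) (M/g)).card : ℝ) := by simp
  rw [h2]
  rcases le_or_gt 1 (M / g) with h | h
  · have : ((Finset.Icc (1:ℤ) (M/g)).card : ℤ) = M / g := by
      rw [Int.card_Icc, Int.toNat_of_nonneg (by omega)]; ring
    have h3 : ((Finset.Icc (1:ℤ) (M/g)).card : ℝ) = ((M / g : ℤ) : ℝ) := by exact_mod_cast this
    rw [h3]
    exact int_ediv_cast_le M g hg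
  · have he : Finset.Icc (1:ℤ) (M/g) = ∅ := Finset.Icc_eq_empty (by omega)
    rw [he]
    simp only [Finset.card_empty, Nat.cast_zero]
    have hMR : (0:ℝ) ≤ (M:ℝ) := by exact_mod_cast hM
    positivity

lemma gcd_sum_le (M : ℤ) (hM : 1 ≤ M) :
    ∑ s ∈ Finset.Icc (1:ℤ) M, ∑ t ∈ Finset.Icc (1:ℤ) M, (Int.gcd s t : ℝ) / t
      ≤ M * (1 + Real.log M) ^ 2 := by
  have hlogM : 0 ≤ Real.log M := Real.log_nonneg (by exact_mod_cast hM)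
  have step1 : ∀ s ∈ Finset.Icc (1:ℤ) M, ∀ t ∈ Finset.Icc (1:ℤ) M,
      (((Int.gcd s t : ℤ)) : ℝ)/t ≤ ∑ g ∈ (Finset.Icc (1:ℤ) M).filter (fun g => g ∣ s ∧ g ∣ t),
        (g:ℝ)/t := by
    intro s hs t ht
    simp only [Finset.mem_Icc] at hs ht
    refine Finset.single_le_sum (f := fun (g : ℤ) => ((g:ℤ):ℝ)/(t:ℝ)) (a := (Int.gcd s t : ℤ)) ?_ ?_
    · intro g hg
      simp only [Finset.mem_filter, Finset.mem_Icc] at hg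
      have h1 : (0:ℝ) ≤ (g:ℝ) := by exact_mod_cast (by omega : (0:ℤ) ≤ g)
      have h2 : (0:ℝ) ≤ (t:ℝ) := by exact_mod_cast (by omega : (0:ℤ) ≤ t)
      positivity
    · simp only [Finset.mem_filter, Finset.mem_Icc]
      have hg0 : 0 < Int.gcd s t := Int.gcd_pos_iff.mpr (Or.inl (by omega))
      refine ⟨⟨by exact_mod_cast hg0, ?_⟩, Int.gcd_dvd_left s t, Int.gcd_dvd_right s t⟩
      calc ((Int.gcd s t : ℕ) : ℤ) ≤ s := Int.le_of_dvd (by omega) (Int.gcd_dvd_left s t)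
        _ ≤ M := hs.2
  calc ∑ s ∈ Finset.Icc (1:ℤ) M, ∑ t ∈ Finset.Icc (1:ℤ) M, (Int.gcd s t : ℝ) / t
      = ∑ s ∈ Finset.Icc (1:ℤ) M, ∑ t ∈ Finset.Icc (1:ℤ) M, (((Int.gcd s t : ℤ)):ℝ) / t := by
        simp only [Int.cast_natCast]
    _ ≤ ∑ s ∈ Finset.Icc (1:ℤ) M, ∑ t ∈ Finset.Icc (1:ℤ) M,
          ∑ g ∈ (Finset.Icc (1:ℤ) M).filter (fun g => g ∣ s ∧ g ∣ t), (g:ℝ)/t := by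
        apply Finset.sum_le_sum; intro s hs
        apply Finset.sum_le_sum; intro t ht
        exact step1 s hs t ht
    _ = ∑ s ∈ Finset.Icc (1:ℤ) M, ∑ t ∈ Finset.Icc (1:ℤ) M,
          ∑ g ∈ Finset.Icc (1:ℤ) M, (if g ∣ s ∧ g ∣ t then (g:ℝ)/t else 0) := by
        apply Finset.sum_congr rfl; intro s _
        apply Finset.sum_congr rfl; intro t _
        rw [Finset.sum_filter]
    _ = ∑ s ∈ Finset.Icc (1:ℤ) M, ∑ g ∈ Finset.Icc (1:ℤ) M,
          ∑ t ∈ Finset.Icc (1:ℤ) M, (if g ∣ s ∧ g ∣ t then (g:ℝ)/t else 0) := by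
        apply Finset.sum_congr rfl; intro s _
        exact Finset.sum_comm
    _ = ∑ g ∈ Finset.Icc (1:ℤ) M, ∑ s ∈ Finset.Icc (1:ℤ) M,
          ∑ t ∈ Finset.Icc (1:ℤ) M, (if g ∣ s ∧ g ∣ t then (g:ℝ)/t else 0) := Finset.sum_comm
    _ = ∑ g ∈ Finset.Icc (1:ℤ) M,
          (∑ s ∈ Finset.Icc (1:ℤ) M, (if g ∣ s then (1:ℝ) else 0))
            * (∑ t ∈ Finset.Icc (1:ℤ) M, (if g ∣ t then (g:ℝ)/t else 0)) := by
        apply Finset.sum_congr rfl; intro g _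
        rw [Finset.sum_mul_sum]
        apply Finset.sum_congr rfl; intro s _
        apply Finset.sum_congr rfl; intro t _
        by_cases h1 : g ∣ s <;> by_cases h2 : g ∣ t <;> simp [h1, h2]
    _ ≤ ∑ g ∈ Finset.Icc (1:ℤ) M, ((M:ℝ)/g) * (1 + Real.log M) := by
        apply Finset.sum_le_sum; intro g hg
        simp only [Finset.mem_Icc] at hg
        have hg0 : (0:ℤ) < g := by omega
        have hf1 : ∑ s ∈ Finset.Icc (1:ℤ) M, (if g ∣ s then (1:ℝ) else 0)
            = (((Finset.Icc (1:ℤ) M).filter (fun s => g ∣ s)).card : ℝ) := by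
          rw [← Finset.sum_filter]; simp
        have hf2 : ∑ t ∈ Finset.Icc (1:ℤ) M, (if g ∣ t then (g:ℝ)/t else 0)
            = ∑ t ∈ (Finset.Icc (1:ℤ) M).filter (fun t => g ∣ t), (g:ℝ)/t := by
          rw [← Finset.sum_filter]
        rw [hf1, hf2, sum_multiples_reindex M g hg0 (fun t => (g:ℝ)/t)]
        have hgR : (0:ℝ) < (g:ℝ) := by exact_mod_cast hg0
        have hsimp : ∀ b ∈ Finset.Icc (1:ℤ) (M/g), (g:ℝ)/(((g*b : ℤ)):ℝ) = (1:ℝ)/(b:ℝ) := by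
          intro b hb
          simp only [Finset.mem_Icc] at hb
          have hbR : (0:ℝ) < (b:ℝ) := by exact_mod_cast (by omega : (0:ℤ) < b)
          push_cast
          field_simp
        rw [Finset.sum_congr rfl hsimp]
        have hMg1 : (1:ℤ) ≤ M / g := by
          calc (1:ℤ) = g / g := (Int.ediv_self hg0.ne').symm
            _ ≤ M / g := Int.ediv_le_ediv hg0 hg.2
        have hhar := harmonic_int_le (M/g) (by omega)
        have hlog2 : Real.log ((M/g : ℤ) : ℝ) ≤ Real.log M := by
          apply Real.log_le_log (by exact_mod_cast hMg1)
          exact_mod_cast Int.ediv_le_self g (by omega : (0:ℤ) ≤ M)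
        have hcard := card_multiples_le M g hg0 (by omega)
        have hsum_nonneg : (0:ℝ) ≤ ∑ b ∈ Finset.Icc (1:ℤ) (M/g), (1:ℝ)/b := by
          apply Finset.sum_nonneg; intro b hb
          simp only [Finset.mem_Icc] at hb
          have : (0:ℝ) ≤ (b:ℝ) := by exact_mod_cast (by omega : (0:ℤ) ≤ b)
          positivity
        have hMR : (0:ℝ) ≤ (M:ℝ) := by exact_mod_cast (by omega : (0:ℤ) ≤ M)
        apply mul_le_mul hcard (by linarith) hsum_nonneg (by positivity)
    _ = (M : ℝ) * (1 + Real.log M) * ∑ g ∈ Finset.Icc (1:ℤ) M, (1:ℝ)/g := by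
        rw [Finset.mul_sum]
        apply Finset.sum_congr rfl; intro g _
        ring
    _ ≤ (M : ℝ) * (1 + Real.log M) * (1 + Real.log M) := by
        apply mul_le_mul_of_nonneg_left (harmonic_int_le M (by omega))
        have hMR : (0:ℝ) ≤ (M:ℝ) := by exact_mod_cast (by omega : (0:ℤ) ≤ M)
        positivity
    _ = M * (1 + Real.log M)^2 := by ring

/-- The number of `x` in an interval `[a,b]` of length `N < p/(2M)` admitting `x'` in the
same interval with `x * s ≡ x' * s'  (mod p)`, where `1 ≤ s, s' ≤ M`. -/
lemma count_pairs (p : ℕ) (a b s s' M : ℤ)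
    (hs : s ∈ Finset.Icc 1 M) (hs' : s' ∈ Finset.Icc 1 M)
    (hbound : 2 * ((Finset.Icc a b).card : ℝ) * (M:ℝ) < (p:ℝ))
    (hN4M : 4 * (M:ℝ) ≤ ((Finset.Icc a b).card : ℝ)) :
    ((((Finset.Icc a b).filter
        (fun x => ∃ x' ∈ Finset.Icc a b, (p:ℤ) ∣ (x * s - x' * s'))).card) : ℝ)
      ≤ (5/4) * ((Finset.Icc a b).card : ℝ) * (Int.gcd s s' : ℝ) / s' := by
  simp only [Finset.mem_Icc] at hs hs'
  set I := Finset.Icc a b with hI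
  set X := I.filter (fun x => ∃ x' ∈ I, (p:ℤ) ∣ (x * s - x' * s')) with hX
  set N : ℝ := (I.card : ℝ) with hN
  have hs'R : (0:ℝ) < (s' : ℝ) := by exact_mod_cast (by omega : (0:ℤ) < s')
  have hgcd0 : 0 < Int.gcd s s' := Int.gcd_pos_iff.mpr (Or.inl (by omega))
  have hgcdR : (0:ℝ) < (Int.gcd s s' : ℝ) := by exact_mod_cast hgcd0
  rcases X.eq_empty_or_nonempty with he | hne
  · rw [he]
    simp only [Finset.card_empty, Nat.cast_zero]
    have hN0 : (0:ℝ) ≤ N := by positivity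
    positivity
  · -- names
    have hMR : (0:ℝ) < (M:ℝ) := by exact_mod_cast (by omega : (0:ℤ) < M)
    have hab : a ≤ b := by
      obtain ⟨x, hx⟩ := hne
      have := Finset.mem_of_mem_filter x hx
      simp only [hI, Finset.mem_Icc] at this; omega
    have hcardI : (I.card : ℤ) = b - a + 1 := by
      rw [hI, Int.card_Icc, Int.toNat_of_nonneg (by omega)]; ring
    -- gcd divisibility setup
    set g : ℤ := (Int.gcd s s' : ℤ) with hg
    have hgdvd : g ∣ s := Int.gcd_dvd_left s s'
    have hgdvd' : g ∣ s' := Int.gcd_dvd_right s s'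
    have hg0 : 0 < g := by rw [hg]; exact_mod_cast hgcd0
    set d : ℤ := s' / g with hd
    have hdg : d * g = s' := Int.ediv_mul_cancel hgdvd'
    have hd0 : 0 < d := by nlinarith [hdg]
    have hcop : IsCoprime (s / g) d := by
      rw [Int.isCoprime_iff_gcd_eq_one]
      exact Int.gcd_div_gcd_div_gcd hgcd0
    -- pairwise divisibility
    have hpair : ∀ x₁ ∈ X, ∀ x₂ ∈ X, d ∣ x₁ - x₂ := by
      intro x₁ h₁ x₂ h₂
      simp only [hX, Finset.mem_filter] at h₁ h₂
      obtain ⟨hx₁I, x₁', hx₁'I, hdvd₁⟩ := h₁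
      obtain ⟨hx₂I, x₂', hx₂'I, hdvd₂⟩ := h₂
      have hD : (p:ℤ) ∣ ((x₁ - x₂) * s - (x₁' - x₂') * s') := by
        have := dvd_sub hdvd₁ hdvd₂
        rw [show (x₁ - x₂) * s - (x₁' - x₂') * s' = (x₁ * s - x₁' * s') - (x₂ * s - x₂' * s') by ring]
        exact this
      have habs : |(x₁ - x₂) * s - (x₁' - x₂') * s'| < (p:ℤ) := by
        simp only [hI, Finset.mem_Icc] at hx₁I hx₂I hx₁'I hx₂'I
        have h1 : |x₁ - x₂| ≤ b - a := by rw [abs_le]; omega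
        have h2 : |x₁' - x₂'| ≤ b - a := by rw [abs_le]; omega
        have hba : ((b - a : ℤ) : ℝ) = N - 1 := by
          rw [hN]
          have : ((I.card : ℤ) : ℝ) = (I.card : ℝ) := by push_cast; ring
          rw [← this, hcardI]; push_cast; ring
        have key : ((|(x₁ - x₂) * s - (x₁' - x₂') * s'| : ℤ) : ℝ) < (p:ℝ) := by
          have e1 : |(x₁ - x₂) * s - (x₁' - x₂') * s'| ≤ (b-a) * M + (b-a) * M := by
            calc |(x₁ - x₂) * s - (x₁' - x₂') * s'|
                ≤ |(x₁ - x₂) * s| + |(x₁' - x₂') * s'| := abs_sub _ _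
              _ = |x₁ - x₂| * |s| + |x₁' - x₂'| * |s'| := by rw [abs_mul, abs_mul]
              _ ≤ (b - a) * M + (b - a) * M := by
                  have hsabs : |s| ≤ M := by rw [abs_le]; omega
                  have hsabs' : |s'| ≤ M := by rw [abs_le]; omega
                  have a1 : (0:ℤ) ≤ |x₁ - x₂| := abs_nonneg _
                  have a2 : (0:ℤ) ≤ |x₁' - x₂'| := abs_nonneg _
                  have a3 : (0:ℤ) ≤ |s| := abs_nonneg _
                  have a4 : (0:ℤ) ≤ |s'| := abs_nonneg _
                  have m1 : |x₁ - x₂| * |s| ≤ (b-a) * M := by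
                    apply mul_le_mul h1 hsabs a3 (by omega)
                  have m2 : |x₁' - x₂'| * |s'| ≤ (b-a) * M := by
                    apply mul_le_mul h2 hsabs' a4 (by omega)
                  omega
          have hba' : (b:ℝ) - a = N - 1 := by push_cast at hba; linarith [hba]
          have e2 : (((b-a) * M + (b-a) * M : ℤ) : ℝ) < (p:ℝ) := by
            push_cast
            nlinarith [hba', hbound, hMR]
          calc ((|(x₁ - x₂) * s - (x₁' - x₂') * s'| : ℤ) : ℝ)
              ≤ (((b-a) * M + (b-a) * M : ℤ) : ℝ) := by exact_mod_cast e1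
            _ < (p:ℝ) := e2
        exact_mod_cast key
      have hzero : (x₁ - x₂) * s - (x₁' - x₂') * s' = 0 := int_zero_of_dvd_abs hD habs
      -- now (x₁ - x₂) * s = (x₁' - x₂') * s', divide by g
      have hexact : (x₁ - x₂) * (s / g) = (x₁' - x₂') * d := by
        have hsg : (s / g) * g = s := Int.ediv_mul_cancel hgdvd
        have hmul : ((x₁ - x₂) * (s / g)) * g = ((x₁' - x₂') * d) * g := by
          rw [mul_assoc, hsg, mul_assoc, hdg]; linarith [hzero]
        exact mul_right_cancel₀ hg0.ne' hmul
      have hdd : d ∣ (x₁ - x₂) * (s / g) := ⟨x₁' - x₂', by linarith [hexact]⟩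
      exact hcop.symm.dvd_of_dvd_mul_right hdd
    -- apply AP counting
    have hXsub : X ⊆ Finset.Icc a b := Finset.filter_subset _ _
    have hcount := ap_card_le X a b d hd0 hXsub hpair hne
    -- convert to real bound
    have hNv : ((b - a : ℤ) : ℝ) = N - 1 := by
      have : ((I.card : ℤ) : ℝ) = (I.card : ℝ) := by push_cast; ring
      rw [hN, ← this, hcardI]; push_cast; ring
    have hcR : (X.card : ℝ) ≤ (N - 1) / d + 1 := by
      have h1 : (X.card : ℝ) ≤ (((b - a) / d : ℤ) : ℝ) + 1 := by exact_mod_cast hcount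
      have h2 := int_ediv_cast_le (b - a) d hd0
      rw [hNv] at h2
      linarith
    have hdR : (0:ℝ) < (d:ℝ) := by exact_mod_cast hd0
    have hdgR : (d:ℝ) * ((Int.gcd s s' : ℕ):ℝ) = (s':ℝ) := by
      have h := congrArg (fun z : ℤ => (z : ℝ)) hdg
      push_cast at h
      convert h using 2
      rw [hg, Int.cast_natCast]
    have hinv : (1:ℝ) / d = (Int.gcd s s' : ℝ) / s' := by
      rw [div_eq_div_iff hdR.ne' hs'R.ne']
      nlinarith [hdgR]
    -- N/d ≥ 4 : since N ≥ 4M ≥ 4 s' ≥ 4 d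
    have hds' : (d:ℝ) ≤ (s':ℝ) := by
      have : d ≤ s' := by nlinarith [hdg, hg0, hd0]
      exact_mod_cast this
    have h4 : 4 * (d:ℝ) ≤ N := by
      have : (s':ℝ) ≤ (M:ℝ) := by exact_mod_cast hs'.2
      linarith
    calc (X.card : ℝ) ≤ (N - 1) / d + 1 := hcR
      _ ≤ N / d + 1 - 1/d := by
          rw [sub_div]
          ring_nf
          linarith
      _ ≤ N / d + N / (4 * d) := by
          have h1d : (0:ℝ) < 1/d := by positivity
          have : N / (4 * d) ≥ 1 := by
            rw [ge_iff_le, le_div_iff₀ (by positivity)]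
            linarith
          linarith
      _ = (5/4) * N * (1/d) := by field_simp; ring
      _ = (5/4) * N * (Int.gcd s s' : ℝ) / s' := by rw [hinv]; ring

/-- If the quadratic is irreducible over `ZMod p` it has no roots. -/
lemma no_root {p : ℕ} [Fact p.Prime] (lam₂ lam₃ : ZMod p)
    (hirr : Irreducible (X ^ 2 + C lam₂ * X + C lam₃ : Polynomial (ZMod p))) :
    ∀ t : ZMod p, t ^ 2 + lam₂ * t + lam₃ ≠ 0 := by
  intro t ht
  have hroot : IsRoot (X ^ 2 + C lam₂ * X + C lam₃ : Polynomial (ZMod p)) t := by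
    simp [IsRoot, ht]
  have hdvd : (X - C t) ∣ (X ^ 2 + C lam₂ * X + C lam₃ : Polynomial (ZMod p)) :=
    dvd_iff_isRoot.mpr hroot
  obtain ⟨q, hq⟩ := hdvd
  rcases hirr.isUnit_or_isUnit hq with hu | hu
  · exact (Polynomial.not_isUnit_X_sub_C t) hu
  · have hdeg : (X ^ 2 + C lam₂ * X + C lam₃ : Polynomial (ZMod p)).natDegree = 2 := by
      compute_degree!
    have hq0 : q ≠ 0 := by
      intro h
      rw [h, mul_zero] at hq
      rw [hq] at hdeg
      simp at hdeg
    have hXt : (X - C t : Polynomial (ZMod p)) ≠ 0 := X_sub_C_ne_zero t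
    have := Polynomial.natDegree_mul hXt hq0
    rw [← hq, hdeg, Polynomial.natDegree_X_sub_C] at this
    have hqdeg : q.natDegree = 0 := Polynomial.natDegree_eq_zero_of_isUnit hu
    omega

lemma omega_not_in_range {p : ℕ} [Fact p.Prime] {E : Type} [Field E] [Algebra (ZMod p) E]
    (lam₂ lam₃ : ZMod p) (ω : E)
    (hirr : Irreducible (X ^ 2 + C lam₂ * X + C lam₃ : Polynomial (ZMod p)))
    (hω : ω ^ 2 + algebraMap (ZMod p) E lam₂ * ω + algebraMap (ZMod p) E lam₃ = 0) :
    ∀ t : ZMod p, algebraMap (ZMod p) E t ≠ ω := by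
  intro t ht
  apply no_root lam₂ lam₃ hirr t
  have hinj : Function.Injective (algebraMap (ZMod p) E) := (algebraMap (ZMod p) E).injective
  apply hinj
  rw [map_add, map_add, map_mul, map_pow, map_zero, ht, hω]

lemma coeff_extract {p : ℕ} [Fact p.Prime] {E : Type} [Field E] [Algebra (ZMod p) E]
    (lam₂ lam₃ : ZMod p) (ω : E)
    (hirr : Irreducible (X ^ 2 + C lam₂ * X + C lam₃ : Polynomial (ZMod p)))
    (hω : ω ^ 2 + algebraMap (ZMod p) E lam₂ * ω + algebraMap (ZMod p) E lam₃ = 0)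
    (a b : ZMod p) (h : algebraMap (ZMod p) E a + algebraMap (ZMod p) E b * ω = 0) :
    a = 0 ∧ b = 0 := by
  have hinj : Function.Injective (algebraMap (ZMod p) E) := (algebraMap (ZMod p) E).injective
  by_cases hb : b = 0
  · subst hb
    simp only [map_zero, zero_mul, add_zero] at h
    exact ⟨hinj (by rw [h, map_zero]), rfl⟩
  · exfalso
    apply omega_not_in_range lam₂ lam₃ ω hirr hω (-a / b)
    have hbE : algebraMap (ZMod p) E b ≠ 0 := by
      intro h0
      exact hb (hinj (by rw [h0, map_zero]))
    rw [map_div₀, map_neg, div_eq_iff hbE]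
    linear_combination -h

lemma key_congruence {p : ℕ} [Fact p.Prime] {E : Type} [Field E] [Algebra (ZMod p) E]
    (lam₁ lam₂ lam₃ : ZMod p) (ω : E)
    (hirr : Irreducible (X ^ 2 + C lam₂ * X + C lam₃ : Polynomial (ZMod p)))
    (hω : ω ^ 2 + algebraMap (ZMod p) E lam₂ * ω + algebraMap (ZMod p) E lam₃ = 0)
    (x y x₀ y₀ x' y' x₀' y₀' : ℤ)
    (h1 : ((x : ZMod p) - lam₁ * (y : ZMod p)) * ((x₀ : ZMod p) - lam₁ * (y₀ : ZMod p)) =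
      ((x' : ZMod p) - lam₁ * (y' : ZMod p)) * ((x₀' : ZMod p) - lam₁ * (y₀' : ZMod p)))
    (h2 : ((x : E) - ω * (y : E)) * ((x₀ : E) - ω * (y₀ : E)) =
      ((x' : E) - ω * (y' : E)) * ((x₀' : E) - ω * (y₀' : E))) :
    (p:ℤ) ∣ (x * x₀ - x' * x₀') ∧ (p:ℤ) ∣ (y * y₀ - y' * y₀') := by
  set ι := algebraMap (ZMod p) E with hι
  -- coefficients in ZMod p
  set A : ZMod p := (x : ZMod p) * x₀ - (x' : ZMod p) * x₀' with hA
  set B : ZMod p := (y : ZMod p) * y₀ - (y' : ZMod p) * y₀' with hB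
  set Cc : ZMod p := ((x : ZMod p) * y₀ + (x₀ : ZMod p) * y) -
    ((x' : ZMod p) * y₀' + (x₀' : ZMod p) * y') with hC
  have hcast : ∀ n : ℤ, ι ((n : ZMod p)) = (n : E) := by
    intro n; rw [hι, map_intCast]
  have hkey : ι (A - lam₃ * B) + ι (-(Cc + lam₂ * B)) * ω = 0 := by
    rw [hA, hB, hC]
    simp only [map_sub, map_add, map_mul, map_neg, hcast]
    linear_combination h2 - ((y:E) * (y₀:E) - (y':E) * (y₀':E)) * hω
  obtain ⟨hAB, hCB⟩ := coeff_extract lam₂ lam₃ ω hirr hω _ _ hkey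
  -- from the lam₁ equation
  have h3 : A - lam₁ * Cc + lam₁ ^ 2 * B = 0 := by
    rw [hA, hB, hC]
    linear_combination h1
  have hquad : lam₁ ^ 2 + lam₂ * lam₁ + lam₃ ≠ 0 := no_root lam₂ lam₃ hirr lam₁
  have hBzero : B = 0 := by
    have hfac : (lam₁ ^ 2 + lam₂ * lam₁ + lam₃) * B = 0 := by
      linear_combination h3 - hAB - lam₁ * hCB
    rcases mul_eq_zero.mp hfac with h | h
    · exact absurd h hquad
    · exact h
  have hAzero : A = 0 := by
    have h5 : A = lam₃ * B := by linear_combination hAB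
    rw [h5, hBzero, mul_zero]
  constructor
  · rw [← ZMod.intCast_zmod_eq_zero_iff_dvd]
    push_cast
    linear_combination hAzero
  · rw [← ZMod.intCast_zmod_eq_zero_iff_dvd]
    push_cast
    linear_combination hBzero

lemma final_numeric (L : ℝ) (hL : 2 ≤ L) :
    (25/256) * (1+L)^4 ≤ Real.exp (40 * L / Real.log L) := by
  have hlogL : 0 < Real.log L := Real.log_pos (by linarith)
  have hpow : (1+L)^4 ≤ (2*L)^4 := pow_le_pow_left₀ (by linarith) (by linarith) 4
  have h1 : (25/256) * (1+L)^4 ≤ 2*L^4 := by nlinarith [pow_nonneg (show (0:ℝ) ≤ L by linarith) 4]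
  have h2 : 2*L^4 ≤ Real.exp (40*L/Real.log L) := by
    rw [← Real.exp_log (show (0:ℝ) < 2*L^4 by positivity)]
    apply Real.exp_le_exp.mpr
    rw [Real.log_mul (by norm_num) (by positivity), Real.log_pow]
    have hs : Real.log L ≤ 2 * Real.sqrt L := by
      have hsp : 0 < Real.sqrt L := Real.sqrt_pos.mpr (by linarith)
      have h := Real.log_le_sub_one_of_pos hsp
      have h2' : Real.log L = 2 * Real.log (Real.sqrt L) := by
        rw [show (2:ℝ) * Real.log (Real.sqrt L) = ((2:ℕ):ℝ) * Real.log (Real.sqrt L) by norm_num,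
          ← Real.log_pow, Real.sq_sqrt (by linarith : (0:ℝ) ≤ L)]
      nlinarith [Real.sqrt_nonneg L]
    have hlog2 : Real.log 2 ≤ Real.log L := Real.log_le_log (by norm_num) (by linarith)
    have hsq : Real.log L ^ 2 ≤ 4 * L := by
      nlinarith [Real.sq_sqrt (show (0:ℝ) ≤ L by linarith), Real.sqrt_nonneg L]
    rw [le_div_iff₀ hlogL]
    push_cast
    nlinarith [hlogL, hlog2, hsq]
  linarith

/-- multiplicative energy bound `E(R,T) ≤ exp(c log p / log log p) (|I||J|)²`
for `R = {(x − λ₁y, x − ω₂y, x − ω₃y) : x ∈ I, y ∈ J}` and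
`T = {(x₀ − λ₁y₀, x₀ − ω₂y₀, x₀ − ω₃y₀) : x₀, y₀ ∈ I₀}` in
`F_p × F_{p²} × F_{p²}`, counted with multiplicity of coefficient tuples. -/
theorem stmt8 :
    ∃ c : ℝ, 0 < c ∧ ∃ p₀ : ℕ, ∀ (p : ℕ) [Fact p.Prime], p₀ < p →
      ∀ (E : Type) [Field E] [Fintype E] [Algebra (ZMod p) E], Fintype.card E = p ^ 2 →
      ∀ (lam₁ lam₂ lam₃ : ZMod p) (ω₂ ω₃ : E),
        Irreducible (X ^ 2 + C lam₂ * X + C lam₃ : Polynomial (ZMod p)) →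
        ω₂ ^ 2 + algebraMap (ZMod p) E lam₂ * ω₂ + algebraMap (ZMod p) E lam₃ = 0 →
        ω₃ ^ 2 + algebraMap (ZMod p) E lam₂ * ω₃ + algebraMap (ZMod p) E lam₃ = 0 →
        ω₂ ≠ ω₃ →
      ∀ a₁ b₁ a₂ b₂ : ℤ,
        Finset.Icc a₁ b₁ ⊆ Finset.Icc 1 ((p : ℤ) - 1) →
        Finset.Icc a₂ b₂ ⊆ Finset.Icc 1 ((p : ℤ) - 1) →
        (p : ℝ) ^ ((3 : ℝ) / 8) ≤ ((Finset.Icc a₁ b₁).card : ℝ) →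
        ((Finset.Icc a₁ b₁).card : ℝ) < (p : ℝ) ^ ((1 : ℝ) / 2) →
        (p : ℝ) ^ ((3 : ℝ) / 8) ≤ ((Finset.Icc a₂ b₂).card : ℝ) →
        ((Finset.Icc a₂ b₂).card : ℝ) < (p : ℝ) ^ ((1 : ℝ) / 2) →
        (Nat.card {t : (ℤ × ℤ × ℤ × ℤ) × (ℤ × ℤ × ℤ × ℤ) //
            t.1.1 ∈ Finset.Icc a₁ b₁ ∧ t.1.2.1 ∈ Finset.Icc a₂ b₂ ∧
            t.1.2.2.1 ∈ Finset.Icc (1 : ℤ) ⌊(p : ℝ) ^ ((3 : ℝ) / 8) / 4⌋ ∧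
            t.1.2.2.2 ∈ Finset.Icc (1 : ℤ) ⌊(p : ℝ) ^ ((3 : ℝ) / 8) / 4⌋ ∧
            t.2.1 ∈ Finset.Icc a₁ b₁ ∧ t.2.2.1 ∈ Finset.Icc a₂ b₂ ∧
            t.2.2.2.1 ∈ Finset.Icc (1 : ℤ) ⌊(p : ℝ) ^ ((3 : ℝ) / 8) / 4⌋ ∧
            t.2.2.2.2 ∈ Finset.Icc (1 : ℤ) ⌊(p : ℝ) ^ ((3 : ℝ) / 8) / 4⌋ ∧
            -- μ = λ₁, in F_p
            ((t.1.1 : ZMod p) - lam₁ * (t.1.2.1 : ZMod p)) *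
                ((t.1.2.2.1 : ZMod p) - lam₁ * (t.1.2.2.2 : ZMod p)) =
              ((t.2.1 : ZMod p) - lam₁ * (t.2.2.1 : ZMod p)) *
                ((t.2.2.2.1 : ZMod p) - lam₁ * (t.2.2.2.2 : ZMod p)) ∧
            (t.1.1 : ZMod p) - lam₁ * (t.1.2.1 : ZMod p) ≠ 0 ∧
            (t.1.2.2.1 : ZMod p) - lam₁ * (t.1.2.2.2 : ZMod p) ≠ 0 ∧
            (t.2.1 : ZMod p) - lam₁ * (t.2.2.1 : ZMod p) ≠ 0 ∧
            (t.2.2.2.1 : ZMod p) - lam₁ * (t.2.2.2.2 : ZMod p) ≠ 0 ∧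
            -- μ = ω₂, in F_{p²}
            ((t.1.1 : E) - ω₂ * (t.1.2.1 : E)) * ((t.1.2.2.1 : E) - ω₂ * (t.1.2.2.2 : E)) =
              ((t.2.1 : E) - ω₂ * (t.2.2.1 : E)) * ((t.2.2.2.1 : E) - ω₂ * (t.2.2.2.2 : E)) ∧
            (t.1.1 : E) - ω₂ * (t.1.2.1 : E) ≠ 0 ∧
            (t.1.2.2.1 : E) - ω₂ * (t.1.2.2.2 : E) ≠ 0 ∧
            (t.2.1 : E) - ω₂ * (t.2.2.1 : E) ≠ 0 ∧
            (t.2.2.2.1 : E) - ω₂ * (t.2.2.2.2 : E) ≠ 0 ∧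
            -- μ = ω₃, in F_{p²}
            ((t.1.1 : E) - ω₃ * (t.1.2.1 : E)) * ((t.1.2.2.1 : E) - ω₃ * (t.1.2.2.2 : E)) =
              ((t.2.1 : E) - ω₃ * (t.2.2.1 : E)) * ((t.2.2.2.1 : E) - ω₃ * (t.2.2.2.2 : E)) ∧
            (t.1.1 : E) - ω₃ * (t.1.2.1 : E) ≠ 0 ∧
            (t.1.2.2.1 : E) - ω₃ * (t.1.2.2.2 : E) ≠ 0 ∧
            (t.2.1 : E) - ω₃ * (t.2.2.1 : E) ≠ 0 ∧
            (t.2.2.2.1 : E) - ω₃ * (t.2.2.2.2 : E) ≠ 0} : ℝ)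
          ≤ Real.exp (c * Real.log p / Real.log (Real.log p)) *
              (((Finset.Icc a₁ b₁).card : ℝ) * ((Finset.Icc a₂ b₂).card : ℝ)) ^ 2 := by
  classical
  refine ⟨40, by norm_num, 10^6, ?_⟩
  intro p instp hp E instE instF instA hcardE lam₁ lam₂ lam₃ ω₂ ω₃ hirr hω₂ hω₃ hω23
  intro a₁ b₁ a₂ b₂ hIsub hJsub hN1l hN1u hN2l hN2u
  set M : ℤ := ⌊(p : ℝ) ^ ((3 : ℝ) / 8) / 4⌋ with hMdef
  set I : Finset ℤ := Finset.Icc a₁ b₁ with hIdef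
  set J : Finset ℤ := Finset.Icc a₂ b₂ with hJdef
  set K : Finset ℤ := Finset.Icc (1:ℤ) M with hKdef
  set N₁ : ℝ := (I.card : ℝ) with hN₁def
  set N₂ : ℝ := (J.card : ℝ) with hN₂def
  clear_value M
  -- basic numerics
  have hpR : (1000001:ℝ) ≤ (p:ℝ) := by exact_mod_cast hp
  have hp0 : (0:ℝ) < p := by linarith
  have hp1 : (1:ℝ) ≤ p := by linarith
  have hrpow_cube : ((p:ℝ)^((3:ℝ)/8))^(8:ℕ) = (p:ℝ)^(3:ℕ) := by
    rw [← Real.rpow_natCast ((p:ℝ)^((3:ℝ)/8)) 8, ← Real.rpow_mul hp0.le,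
      ← Real.rpow_natCast (p:ℝ) 3]
    norm_num
  have h438 : (4:ℝ) ≤ (p:ℝ)^((3:ℝ)/8) := by
    apply le_of_pow_le_pow_left₀ (n := 8) (by norm_num) (by positivity)
    rw [hrpow_cube]
    have h1 : (1000001:ℝ)^(3:ℕ) ≤ (p:ℝ)^(3:ℕ) := by
      apply pow_le_pow_left₀ (by norm_num) hpR
    calc (4:ℝ)^(8:ℕ) = 65536 := by norm_num
      _ ≤ (1000001:ℝ)^(3:ℕ) := by norm_num
      _ ≤ (p:ℝ)^(3:ℕ) := h1
  have hM1 : (1:ℤ) ≤ M := by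
    rw [hMdef]
    apply Int.le_floor.mpr
    push_cast
    linarith
  have hMR : (M:ℝ) ≤ (p:ℝ)^((3:ℝ)/8)/4 := by rw [hMdef]; exact Int.floor_le _
  have hM1R : (1:ℝ) ≤ (M:ℝ) := by exact_mod_cast hM1
  have h38le1 : (p:ℝ)^((3:ℝ)/8) ≤ p := by
    calc (p:ℝ)^((3:ℝ)/8) ≤ (p:ℝ)^((1:ℝ)) := Real.rpow_le_rpow_of_exponent_le hp1 (by norm_num)
      _ = p := Real.rpow_one p
  have hMp : (M:ℝ) < (p:ℝ) := by linarith
  have hMpZ : M < (p:ℤ) := by exact_mod_cast hMp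
  have hrpow38pos : (0:ℝ) < (p:ℝ)^((3:ℝ)/8) := Real.rpow_pos_of_pos hp0 _
  have hN1pos : (0:ℝ) < N₁ := lt_of_lt_of_le hrpow38pos hN1l
  have hN2pos : (0:ℝ) < N₂ := lt_of_lt_of_le hrpow38pos hN2l
  have h4M1 : 4*(M:ℝ) ≤ N₁ := by linarith
  have h4M2 : 4*(M:ℝ) ≤ N₂ := by linarith
  have hrp78 : (p:ℝ)^((1:ℝ)/2) * (p:ℝ)^((3:ℝ)/8) = (p:ℝ)^((7:ℝ)/8) := by
    rw [← Real.rpow_add hp0]; norm_num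
  have h78le : (p:ℝ)^((7:ℝ)/8) ≤ p := by
    calc (p:ℝ)^((7:ℝ)/8) ≤ (p:ℝ)^((1:ℝ)) := Real.rpow_le_rpow_of_exponent_le hp1 (by norm_num)
      _ = p := Real.rpow_one p
  have hbound1 : 2 * N₁ * (M:ℝ) < p := by
    have e1 : N₁ * (p:ℝ)^((3:ℝ)/8) < (p:ℝ)^((1:ℝ)/2) * (p:ℝ)^((3:ℝ)/8) :=
      mul_lt_mul_of_pos_right hN1u hrpow38pos
    have e2 : 2*N₁*(M:ℝ) ≤ 2*N₁*((p:ℝ)^((3:ℝ)/8)/4) :=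
      mul_le_mul_of_nonneg_left hMR (by positivity)
    linarith [e1, e2, hrp78, h78le, hp0]
  have hbound2 : 2 * N₂ * (M:ℝ) < p := by
    have e1 : N₂ * (p:ℝ)^((3:ℝ)/8) < (p:ℝ)^((1:ℝ)/2) * (p:ℝ)^((3:ℝ)/8) :=
      mul_lt_mul_of_pos_right hN2u hrpow38pos
    have e2 : 2*N₂*(M:ℝ) ≤ 2*N₂*((p:ℝ)^((3:ℝ)/8)/4) :=
      mul_le_mul_of_nonneg_left hMR (by positivity)
    linarith [e1, e2, hrp78, h78le, hp0]
  have hL2 : 2 ≤ Real.log p := by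
    have hexp : Real.exp 2 ≤ (p:ℝ) := by
      have h1 : Real.exp 2 = Real.exp 1 * Real.exp 1 := by
        rw [← Real.exp_add]; norm_num
      nlinarith [Real.exp_one_lt_d9, Real.exp_pos 1]
    exact (Real.le_log_iff_exp_le hp0).mpr hexp
  have hp_prime : Prime (p:ℤ) := Int.prime_iff_natAbs_prime.mpr (by simpa using instp.out)
  -- the master finset
  set U : Finset ((ℤ×ℤ×ℤ×ℤ)×(ℤ×ℤ×ℤ×ℤ)) :=
    ((I ×ˢ J ×ˢ K ×ˢ K) ×ˢ (I ×ˢ J ×ˢ K ×ˢ K)).filter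
      (fun t => ((p:ℤ) ∣ (t.1.1 * t.1.2.2.1 - t.2.1 * t.2.2.2.1)) ∧
        ((p:ℤ) ∣ (t.1.2.1 * t.1.2.2.2 - t.2.2.1 * t.2.2.2.2))) with hUdef
  clear_value U
  -- Step 1 : the subtype injects into U
  have hsub : Nat.card {t : (ℤ×ℤ×ℤ×ℤ)×(ℤ×ℤ×ℤ×ℤ) //
      t.1.1 ∈ I ∧ t.1.2.1 ∈ J ∧ t.1.2.2.1 ∈ K ∧ t.1.2.2.2 ∈ K ∧
      t.2.1 ∈ I ∧ t.2.2.1 ∈ J ∧ t.2.2.2.1 ∈ K ∧ t.2.2.2.2 ∈ K ∧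
      ((t.1.1 : ZMod p) - lam₁ * (t.1.2.1 : ZMod p)) *
          ((t.1.2.2.1 : ZMod p) - lam₁ * (t.1.2.2.2 : ZMod p)) =
        ((t.2.1 : ZMod p) - lam₁ * (t.2.2.1 : ZMod p)) *
          ((t.2.2.2.1 : ZMod p) - lam₁ * (t.2.2.2.2 : ZMod p)) ∧
      (t.1.1 : ZMod p) - lam₁ * (t.1.2.1 : ZMod p) ≠ 0 ∧
      (t.1.2.2.1 : ZMod p) - lam₁ * (t.1.2.2.2 : ZMod p) ≠ 0 ∧
      (t.2.1 : ZMod p) - lam₁ * (t.2.2.1 : ZMod p) ≠ 0 ∧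
      (t.2.2.2.1 : ZMod p) - lam₁ * (t.2.2.2.2 : ZMod p) ≠ 0 ∧
      ((t.1.1 : E) - ω₂ * (t.1.2.1 : E)) * ((t.1.2.2.1 : E) - ω₂ * (t.1.2.2.2 : E)) =
        ((t.2.1 : E) - ω₂ * (t.2.2.1 : E)) * ((t.2.2.2.1 : E) - ω₂ * (t.2.2.2.2 : E)) ∧
      (t.1.1 : E) - ω₂ * (t.1.2.1 : E) ≠ 0 ∧
      (t.1.2.2.1 : E) - ω₂ * (t.1.2.2.2 : E) ≠ 0 ∧
      (t.2.1 : E) - ω₂ * (t.2.2.1 : E) ≠ 0 ∧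
      (t.2.2.2.1 : E) - ω₂ * (t.2.2.2.2 : E) ≠ 0 ∧
      ((t.1.1 : E) - ω₃ * (t.1.2.1 : E)) * ((t.1.2.2.1 : E) - ω₃ * (t.1.2.2.2 : E)) =
        ((t.2.1 : E) - ω₃ * (t.2.2.1 : E)) * ((t.2.2.2.1 : E) - ω₃ * (t.2.2.2.2 : E)) ∧
      (t.1.1 : E) - ω₃ * (t.1.2.1 : E) ≠ 0 ∧
      (t.1.2.2.1 : E) - ω₃ * (t.1.2.2.2 : E) ≠ 0 ∧
      (t.2.1 : E) - ω₃ * (t.2.2.1 : E) ≠ 0 ∧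
      (t.2.2.2.1 : E) - ω₃ * (t.2.2.2.2 : E) ≠ 0} ≤ U.card := by
    have hf : ∀ t : (ℤ×ℤ×ℤ×ℤ)×(ℤ×ℤ×ℤ×ℤ),
        (t.1.1 ∈ I ∧ t.1.2.1 ∈ J ∧ t.1.2.2.1 ∈ K ∧ t.1.2.2.2 ∈ K ∧
        t.2.1 ∈ I ∧ t.2.2.1 ∈ J ∧ t.2.2.2.1 ∈ K ∧ t.2.2.2.2 ∈ K ∧
        ((t.1.1 : ZMod p) - lam₁ * (t.1.2.1 : ZMod p)) *
            ((t.1.2.2.1 : ZMod p) - lam₁ * (t.1.2.2.2 : ZMod p)) =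
          ((t.2.1 : ZMod p) - lam₁ * (t.2.2.1 : ZMod p)) *
            ((t.2.2.2.1 : ZMod p) - lam₁ * (t.2.2.2.2 : ZMod p)) ∧
        (t.1.1 : ZMod p) - lam₁ * (t.1.2.1 : ZMod p) ≠ 0 ∧
        (t.1.2.2.1 : ZMod p) - lam₁ * (t.1.2.2.2 : ZMod p) ≠ 0 ∧
        (t.2.1 : ZMod p) - lam₁ * (t.2.2.1 : ZMod p) ≠ 0 ∧
        (t.2.2.2.1 : ZMod p) - lam₁ * (t.2.2.2.2 : ZMod p) ≠ 0 ∧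
        ((t.1.1 : E) - ω₂ * (t.1.2.1 : E)) * ((t.1.2.2.1 : E) - ω₂ * (t.1.2.2.2 : E)) =
          ((t.2.1 : E) - ω₂ * (t.2.2.1 : E)) * ((t.2.2.2.1 : E) - ω₂ * (t.2.2.2.2 : E)) ∧
        (t.1.1 : E) - ω₂ * (t.1.2.1 : E) ≠ 0 ∧
        (t.1.2.2.1 : E) - ω₂ * (t.1.2.2.2 : E) ≠ 0 ∧
        (t.2.1 : E) - ω₂ * (t.2.2.1 : E) ≠ 0 ∧
        (t.2.2.2.1 : E) - ω₂ * (t.2.2.2.2 : E) ≠ 0 ∧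
        ((t.1.1 : E) - ω₃ * (t.1.2.1 : E)) * ((t.1.2.2.1 : E) - ω₃ * (t.1.2.2.2 : E)) =
          ((t.2.1 : E) - ω₃ * (t.2.2.1 : E)) * ((t.2.2.2.1 : E) - ω₃ * (t.2.2.2.2 : E)) ∧
        (t.1.1 : E) - ω₃ * (t.1.2.1 : E) ≠ 0 ∧
        (t.1.2.2.1 : E) - ω₃ * (t.1.2.2.2 : E) ≠ 0 ∧
        (t.2.1 : E) - ω₃ * (t.2.2.1 : E) ≠ 0 ∧
        (t.2.2.2.1 : E) - ω₃ * (t.2.2.2.2 : E) ≠ 0) → t ∈ U := by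
      rintro t ⟨h1, h2, h3, h4, h5, h6, h7, h8, heqZ, _, _, _, _, heqE, _, _, _, _, _⟩
      have hdvd := key_congruence lam₁ lam₂ lam₃ ω₂ hirr hω₂
        t.1.1 t.1.2.1 t.1.2.2.1 t.1.2.2.2 t.2.1 t.2.2.1 t.2.2.2.1 t.2.2.2.2 heqZ heqE
      rw [hUdef]
      simp only [Finset.mem_filter, Finset.mem_product]
      exact ⟨⟨⟨h1, h2, h3, h4⟩, h5, h6, h7, h8⟩, hdvd.1, hdvd.2⟩
    calc Nat.card _ ≤ Nat.card {u // u ∈ U} := by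
          apply Nat.card_le_card_of_injective
            (f := fun t => (⟨t.1, hf t.1 t.2⟩ : {u // u ∈ U}))
          intro t₁ t₂ h
          simp only [Subtype.mk.injEq] at h
          exact Subtype.ext h
      _ = U.card := by rw [Nat.card_eq_fintype_card]; exact Fintype.card_coe U
  -- Step 2 : fiberwise count over the small coordinates
  have hfib : U.card = ∑ q ∈ K ×ˢ K ×ˢ K ×ˢ K,
      (U.filter (fun t => (t.1.2.2.1, t.1.2.2.2, t.2.2.2.1, t.2.2.2.2) = q)).card := by
    apply Finset.card_eq_sum_card_fiberwise
    intro t ht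
    rw [hUdef] at ht
    simp only [Finset.mem_coe, Finset.mem_filter, Finset.mem_product] at ht
    simp only [Finset.mem_coe, Finset.mem_product]
    exact ⟨ht.1.1.2.2.1, ht.1.1.2.2.2, ht.1.2.2.2.1, ht.1.2.2.2.2⟩
  -- Step 3 : fiber bound
  have hfibbound : ∀ q ∈ K ×ˢ K ×ˢ K ×ˢ K,
      ((U.filter (fun t => (t.1.2.2.1, t.1.2.2.2, t.2.2.2.1, t.2.2.2.2) = q)).card : ℝ) ≤
        ((5/4) * N₁ * (Int.gcd q.1 q.2.2.1 : ℝ) / q.2.2.1) *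
        ((5/4) * N₂ * (Int.gcd q.2.1 q.2.2.2 : ℝ) / q.2.2.2) := by
    intro q hq
    simp only [Finset.mem_product] at hq
    obtain ⟨hq1, hq2, hq3, hq4⟩ := hq
    have hXle := count_pairs p a₁ b₁ q.1 q.2.2.1 M hq1 hq3 hbound1 h4M1
    have hYle := count_pairs p a₂ b₂ q.2.1 q.2.2.2 M hq2 hq4 hbound2 h4M2
    set X := (Finset.Icc a₁ b₁).filter
      (fun x => ∃ x' ∈ Finset.Icc a₁ b₁, (p:ℤ) ∣ (x * q.1 - x' * q.2.2.1)) with hXdef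
    set Y := (Finset.Icc a₂ b₂).filter
      (fun y => ∃ y' ∈ Finset.Icc a₂ b₂, (p:ℤ) ∣ (y * q.2.1 - y' * q.2.2.2)) with hYdef
    have hcardle : (U.filter (fun t => (t.1.2.2.1, t.1.2.2.2, t.2.2.2.1, t.2.2.2.2) = q)).card
        ≤ (X ×ˢ Y).card := by
      apply Finset.card_le_card_of_injOn (fun t => (t.1.1, t.1.2.1))
      · intro t ht
        simp only [Finset.mem_coe, Finset.mem_filter] at ht
        obtain ⟨htU, htq⟩ := ht
        rw [hUdef] at htU
        simp only [Finset.mem_filter, Finset.mem_product] at htU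
        obtain ⟨⟨⟨hx, hy, hx0, hy0⟩, hx', hy', hx0', hy0'⟩, hdvd1, hdvd2⟩ := htU
        have e1 : t.1.2.2.1 = q.1 := by rw [← htq]
        have e2 : t.1.2.2.2 = q.2.1 := by rw [← htq]
        have e3 : t.2.2.2.1 = q.2.2.1 := by rw [← htq]
        have e4 : t.2.2.2.2 = q.2.2.2 := by rw [← htq]
        simp only [Finset.mem_coe, Finset.mem_product, hXdef, hYdef, Finset.mem_filter]
        constructor
        · exact ⟨hx, t.2.1, hx', by rw [← e1, ← e3]; exact hdvd1⟩
        · exact ⟨hy, t.2.2.1, hy', by rw [← e2, ← e4]; exact hdvd2⟩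
      · intro t₁ ht₁ t₂ ht₂ heq
        simp only [Prod.mk.injEq] at heq
        obtain ⟨ex, ey⟩ := heq
        simp only [Finset.mem_coe, Finset.mem_filter] at ht₁ ht₂
        obtain ⟨htU₁, htq₁⟩ := ht₁
        obtain ⟨htU₂, htq₂⟩ := ht₂
        rw [hUdef] at htU₁ htU₂
        simp only [Finset.mem_filter, Finset.mem_product] at htU₁ htU₂
        obtain ⟨⟨⟨hx₁, hy₁, _, _⟩, hx'₁, hy'₁, _, _⟩, hdvd11, hdvd12⟩ := htU₁
        obtain ⟨⟨⟨hx₂, hy₂, _, _⟩, hx'₂, hy'₂, _, _⟩, hdvd21, hdvd22⟩ := htU₂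
        -- small coordinates agree via the fiber condition
        have f1 : t₁.1.2.2.1 = t₂.1.2.2.1 := by
          have v1 : t₁.1.2.2.1 = q.1 := by rw [← htq₁]
          have v2 : t₂.1.2.2.1 = q.1 := by rw [← htq₂]
          rw [v1, v2]
        have f2 : t₁.1.2.2.2 = t₂.1.2.2.2 := by
          have v1 : t₁.1.2.2.2 = q.2.1 := by rw [← htq₁]
          have v2 : t₂.1.2.2.2 = q.2.1 := by rw [← htq₂]
          rw [v1, v2]
        have f3 : t₁.2.2.2.1 = t₂.2.2.2.1 := by
          have v1 : t₁.2.2.2.1 = q.2.2.1 := by rw [← htq₁]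
          have v2 : t₂.2.2.2.1 = q.2.2.1 := by rw [← htq₂]
          rw [v1, v2]
        have f4 : t₁.2.2.2.2 = t₂.2.2.2.2 := by
          have v1 : t₁.2.2.2.2 = q.2.2.2 := by rw [← htq₁]
          have v2 : t₂.2.2.2.2 = q.2.2.2 := by rw [← htq₂]
          rw [v1, v2]
        -- the big primed coordinates agree by the congruence
        have hq3K : q.2.2.1 ∈ K := hq3
        have hq4K : q.2.2.2 ∈ K := hq4
        have hnd1 : ¬ (p:ℤ) ∣ q.2.2.1 := by
          intro hdd
          rw [hKdef] at hq3K
          simp only [Finset.mem_Icc] at hq3K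
          have := Int.le_of_dvd (by omega) hdd
          omega
        have hnd2 : ¬ (p:ℤ) ∣ q.2.2.2 := by
          intro hdd
          rw [hKdef] at hq4K
          simp only [Finset.mem_Icc] at hq4K
          have := Int.le_of_dvd (by omega) hdd
          omega
        have gx' : t₁.2.1 = t₂.2.1 := by
          have hd : (p:ℤ) ∣ (t₁.2.1 - t₂.2.1) * q.2.2.1 := by
            have v1 : t₁.2.2.2.1 = q.2.2.1 := by rw [← htq₁]
            have v2 : t₂.2.2.2.1 = q.2.2.1 := by rw [← htq₂]
            have v3 : t₁.1.2.2.1 = q.1 := by rw [← htq₁]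
            have v4 : t₂.1.2.2.1 = q.1 := by rw [← htq₂]
            rw [v1, v3] at hdvd11
            rw [v2, v4] at hdvd21
            have := dvd_sub hdvd21 hdvd11
            have heq2 : (t₂.1.1 * q.1 - t₂.2.1 * q.2.2.1) -
                (t₁.1.1 * q.1 - t₁.2.1 * q.2.2.1) = (t₁.2.1 - t₂.2.1) * q.2.2.1 := by
              rw [← ex]; ring
            rwa [heq2] at this
          have hpd : (p:ℤ) ∣ (t₁.2.1 - t₂.2.1) :=
            (hp_prime.dvd_mul.mp hd).resolve_right hnd1
          have hr₁ := hIsub hx'₁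
          have hr₂ := hIsub hx'₂
          simp only [Finset.mem_Icc] at hr₁ hr₂
          have : t₁.2.1 - t₂.2.1 = 0 := by
            apply int_zero_of_dvd_abs hpd
            rw [abs_lt]
            omega
          omega
        have gy' : t₁.2.2.1 = t₂.2.2.1 := by
          have hd : (p:ℤ) ∣ (t₁.2.2.1 - t₂.2.2.1) * q.2.2.2 := by
            have v1 : t₁.2.2.2.2 = q.2.2.2 := by rw [← htq₁]
            have v2 : t₂.2.2.2.2 = q.2.2.2 := by rw [← htq₂]
            have v3 : t₁.1.2.2.2 = q.2.1 := by rw [← htq₁]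
            have v4 : t₂.1.2.2.2 = q.2.1 := by rw [← htq₂]
            rw [v1, v3] at hdvd12
            rw [v2, v4] at hdvd22
            have := dvd_sub hdvd22 hdvd12
            have heq2 : (t₂.1.2.1 * q.2.1 - t₂.2.2.1 * q.2.2.2) -
                (t₁.1.2.1 * q.2.1 - t₁.2.2.1 * q.2.2.2) = (t₁.2.2.1 - t₂.2.2.1) * q.2.2.2 := by
              rw [← ey]; ring
            rwa [heq2] at this
          have hpd : (p:ℤ) ∣ (t₁.2.2.1 - t₂.2.2.1) :=
            (hp_prime.dvd_mul.mp hd).resolve_right hnd2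
          have hr₁ := hJsub hy'₁
          have hr₂ := hJsub hy'₂
          simp only [Finset.mem_Icc] at hr₁ hr₂
          have : t₁.2.2.1 - t₂.2.2.1 = 0 := by
            apply int_zero_of_dvd_abs hpd
            rw [abs_lt]
            omega
          omega
        -- assemble
        obtain ⟨⟨u1, u2, u3, u4⟩, v1, v2, v3, v4⟩ := t₁
        obtain ⟨⟨w1, w2, w3, w4⟩, z1, z2, z3, z4⟩ := t₂
        simp only [Prod.mk.injEq] at ex ey f1 f2 f3 f4 gx' gy' ⊢
        exact ⟨⟨ex, ey, f1, f2⟩, gx', gy', f3, f4⟩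
    calc ((U.filter (fun t => (t.1.2.2.1, t.1.2.2.2, t.2.2.2.1, t.2.2.2.2) = q)).card : ℝ)
        ≤ ((X ×ˢ Y).card : ℝ) := by exact_mod_cast hcardle
      _ = (X.card : ℝ) * (Y.card : ℝ) := by rw [Finset.card_product]; push_cast; ring
      _ ≤ ((5/4) * N₁ * (Int.gcd q.1 q.2.2.1 : ℝ) / q.2.2.1) *
            ((5/4) * N₂ * (Int.gcd q.2.1 q.2.2.2 : ℝ) / q.2.2.2) := by
          apply mul_le_mul hXle hYle (by positivity)
          rw [hKdef] at hq1 hq3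
          simp only [Finset.mem_Icc] at hq1 hq3
          have hs'R : (0:ℝ) < (q.2.2.1:ℝ) := by exact_mod_cast (by omega : (0:ℤ) < q.2.2.1)
          have hgR : (0:ℝ) ≤ ((Int.gcd q.1 q.2.2.1 : ℕ):ℝ) := by positivity
          positivity
  -- Step 4 : summation
  have hgcdsum := gcd_sum_le M hM1
  have hlogM0 : 0 ≤ Real.log M := Real.log_nonneg hM1R
  have hlogMp : Real.log M ≤ Real.log p := Real.log_le_log (by linarith) hMp.le
  have hUle : (U.card : ℝ) ≤
      ((5/4) * N₁ * ((M:ℝ) * (1 + Real.log M)^2)) *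
      ((5/4) * N₂ * ((M:ℝ) * (1 + Real.log M)^2)) := by
    have hc1 : (U.card : ℝ) = ∑ q ∈ K ×ˢ K ×ˢ K ×ˢ K,
        ((U.filter (fun t => (t.1.2.2.1, t.1.2.2.2, t.2.2.2.1, t.2.2.2.2) = q)).card : ℝ) := by
      rw [hfib]; push_cast; ring
    rw [hc1]
    have hstep := Finset.sum_le_sum hfibbound
    refine le_trans hstep ?_
    have hfactor : ∑ q ∈ K ×ˢ K ×ˢ K ×ˢ K,
        ((5/4) * N₁ * (Int.gcd q.1 q.2.2.1 : ℝ) / q.2.2.1) *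
        ((5/4) * N₂ * (Int.gcd q.2.1 q.2.2.2 : ℝ) / q.2.2.2)
        = (∑ s ∈ K, ∑ s' ∈ K, (5/4) * N₁ * (Int.gcd s s' : ℝ) / s') *
          (∑ w ∈ K, ∑ w' ∈ K, (5/4) * N₂ * (Int.gcd w w' : ℝ) / w') := by
      simp only [Finset.sum_product]
      rw [Finset.sum_mul]
      apply Finset.sum_congr rfl; intro s _
      rw [Finset.sum_mul]
      rw [Finset.sum_comm]
      apply Finset.sum_congr rfl; intro s' _
      rw [Finset.mul_sum]
      apply Finset.sum_congr rfl; intro w _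
      rw [Finset.mul_sum]
    rw [hfactor]
    have hFsum : ∑ s ∈ K, ∑ s' ∈ K, (5/4) * N₁ * (Int.gcd s s' : ℝ) / s'
        ≤ (5/4) * N₁ * ((M:ℝ) * (1 + Real.log M)^2) := by
      have he : ∑ s ∈ K, ∑ s' ∈ K, (5/4) * N₁ * (Int.gcd s s' : ℝ) / s'
          = (5/4) * N₁ * ∑ s ∈ K, ∑ s' ∈ K, (Int.gcd s s' : ℝ) / s' := by
        rw [Finset.mul_sum]
        apply Finset.sum_congr rfl; intro s _
        rw [Finset.mul_sum]
        apply Finset.sum_congr rfl; intro s' _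
        ring
      rw [he, hKdef]
      apply mul_le_mul_of_nonneg_left hgcdsum (by positivity)
    have hGsum : ∑ w ∈ K, ∑ w' ∈ K, (5/4) * N₂ * (Int.gcd w w' : ℝ) / w'
        ≤ (5/4) * N₂ * ((M:ℝ) * (1 + Real.log M)^2) := by
      have he : ∑ w ∈ K, ∑ w' ∈ K, (5/4) * N₂ * (Int.gcd w w' : ℝ) / w'
          = (5/4) * N₂ * ∑ w ∈ K, ∑ w' ∈ K, (Int.gcd w w' : ℝ) / w' := by
        rw [Finset.mul_sum]
        apply Finset.sum_congr rfl; intro w _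
        rw [Finset.mul_sum]
        apply Finset.sum_congr rfl; intro w' _
        ring
      rw [he, hKdef]
      apply mul_le_mul_of_nonneg_left hgcdsum (by positivity)
    have hGnonneg : (0:ℝ) ≤ ∑ w ∈ K, ∑ w' ∈ K, (5/4) * N₂ * (Int.gcd w w' : ℝ) / w' := by
      apply Finset.sum_nonneg; intro w _
      apply Finset.sum_nonneg; intro w' hw'
      rw [hKdef] at hw'
      simp only [Finset.mem_Icc] at hw'
      have hw'R : (0:ℝ) ≤ (w':ℝ) := by exact_mod_cast (by omega : (0:ℤ) ≤ w')
      exact div_nonneg (mul_nonneg (mul_nonneg (by norm_num) hN2pos.le)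
        (Nat.cast_nonneg _)) hw'R
    have hS0 : (0:ℝ) ≤ (M:ℝ)*(1+Real.log M)^2 :=
      mul_nonneg (by linarith) (sq_nonneg _)
    exact mul_le_mul hFsum hGsum hGnonneg
      (mul_nonneg (by linarith) hS0)
  -- Step 5 : conclusion
  set L := Real.log p with hLdef
  clear_value L
  have hlogM0' : 0 ≤ 1 + Real.log M := by linarith
  have hH : (1 + Real.log M)^2 ≤ (1 + L)^2 :=
    pow_le_pow_left₀ hlogM0' (by rw [hLdef]; linarith) 2
  have hM2 : (M:ℝ)*(M:ℝ) ≤ N₁*N₂/16 := by nlinarith [h4M1, h4M2, hM1R]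
  have hgoal1 : (U.card : ℝ) ≤ (25/256) * (1+L)^4 * (N₁*N₂)^2 := by
    have c1 : (0:ℝ) ≤ (25/16) * N₁ * N₂ * ((M:ℝ)*(M:ℝ)) := by nlinarith
    have c2 : (0:ℝ) ≤ (25/16) * N₁ * N₂ := by nlinarith
    calc (U.card : ℝ) ≤ ((5/4) * N₁ * ((M:ℝ) * (1 + Real.log M)^2)) *
        ((5/4) * N₂ * ((M:ℝ) * (1 + Real.log M)^2)) := hUle
      _ = (25/16) * N₁ * N₂ * ((M:ℝ)*(M:ℝ)) * ((1+Real.log M)^2)^2 := by ring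
      _ ≤ (25/16) * N₁ * N₂ * ((M:ℝ)*(M:ℝ)) * ((1+L)^2)^2 := by
          exact mul_le_mul_of_nonneg_left
            (pow_le_pow_left₀ (sq_nonneg _) hH 2) c1
      _ ≤ (25/16) * N₁ * N₂ * (N₁*N₂/16) * ((1+L)^2)^2 := by
          apply mul_le_mul_of_nonneg_right (mul_le_mul_of_nonneg_left hM2 c2) (by positivity)
      _ = (25/256) * (1+L)^4 * (N₁*N₂)^2 := by ring
  have hnum := final_numeric L hL2
  refine le_trans (b := (U.card : ℝ)) (by exact_mod_cast hsub) ?_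
  calc (U.card : ℝ) ≤ (25/256) * (1+L)^4 * (N₁*N₂)^2 := hgoal1
    _ ≤ Real.exp (40 * L / Real.log L) * (N₁*N₂)^2 :=
        mul_le_mul_of_nonneg_right hnum (by positivity)
    _ = Real.exp (40 * L / Real.log L) * (N₁ * N₂)^2 := by ring
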